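/- Composition rule for Choi operators (Rule 3): let 𝒜 be a linear map from matrices on ℂᵃ to matrices on ℂᶜ ⊗ ℂᵈ with Choi operator A on (ℂᶜ ⊗ ℂᵈ) ⊗ ℂᵃ, and let ℬ be a linear map from matrices on ℂᵈ ⊗ ℂᵉ to matrices on ℂᶠ with Choi operator B on ℂᶠ ⊗ (ℂᵈ ⊗ ℂᵉ). Let 𝒞 be the composite map from matrices on ℂᵃ ⊗ ℂᵉ to matrices on ℂᶜ ⊗ ℂᶠ obtained by applying 𝒜 ⊗ I_e, reordering tensor factors to (ℂᶜ) ⊗ (ℂᵈ ⊗ ℂᵉ), and then applying I_c ⊗ ℬ. Then the Choi operator of 𝒞 equals the link product A * B = Tr_d[(Aᶿᵈ ⊗ I_{f,e})(I_{c,a} ⊗ B)], where the identity factors are inserted so that both operators act on the common space spanned by the wires c, a, d, f, e, θ_d denotes partial transposition on the factor ℂᵈ, and Tr_d is the partial trace over ℂᵈ. -/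

import Mathlib

open Matrix Kronecker

/-- The Choi operator of a linear map between matrix algebras:
`C_{(i,k),(j,l)} = (𝒞(E_{kl}))_{ij}` with `E_{kl}` the matrix units. -/
noncomputable def choi {n m : Type*} [Fintype n] [DecidableEq n]
    (𝒞 : Matrix n n ℂ →ₗ[ℂ] Matrix m m ℂ) : Matrix (m × n) (m × n) ℂ :=
  fun p q => 𝒞 (Matrix.single p.2 q.2 1) p.1 q.1

/-- The tensor product `Φ ⊗ I_e` of a linear map on matrices with the identity map on the
matrix algebra of a system `e`. -/
noncomputable def tensorId {n m : Type*} [Fintype n] [Fintype m]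
    (Φ : Matrix n n ℂ →ₗ[ℂ] Matrix m m ℂ) (e : Type*) [Fintype e] :
    Matrix (n × e) (n × e) ℂ →ₗ[ℂ] Matrix (m × e) (m × e) ℂ where
  toFun M := fun p q => Φ (fun k k' => M (k, p.2) (k', q.2)) p.1 q.1
  map_add' M N := by
    funext p q
    have h : (fun k k' => (M + N) (k, p.2) (k', q.2)) =
        ((fun k k' => M (k, p.2) (k', q.2)) : Matrix n n ℂ) +
          (fun k k' => N (k, p.2) (k', q.2)) := rfl
    show Φ _ p.1 q.1 = _
    rw [h]; exact congrFun (congrFun (Φ.map_add _ _) _) _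
  map_smul' c M := by
    funext p q
    have h : (fun k k' => (c • M) (k, p.2) (k', q.2)) =
        c • ((fun k k' => M (k, p.2) (k', q.2)) : Matrix n n ℂ) := rfl
    show Φ _ p.1 q.1 = _
    rw [h]; exact congrFun (congrFun (Φ.map_smul _ _) _) _

/-- The tensor product `I_c ⊗ Φ` of the identity map on the matrix algebra of a system `c`
with a linear map on matrices. -/
noncomputable def idTensor (c : Type*) [Fintype c] {n m : Type*} [Fintype n] [Fintype m]
    (Φ : Matrix n n ℂ →ₗ[ℂ] Matrix m m ℂ) :
    Matrix (c × n) (c × n) ℂ →ₗ[ℂ] Matrix (c × m) (c × m) ℂ where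
  toFun M := fun p q => Φ (fun k k' => M (p.1, k) (q.1, k')) p.2 q.2
  map_add' M N := by
    funext p q
    have h : (fun k k' => (M + N) (p.1, k) (q.1, k')) =
        ((fun k k' => M (p.1, k) (q.1, k')) : Matrix n n ℂ) +
          (fun k k' => N (p.1, k) (q.1, k')) := rfl
    show Φ _ p.2 q.2 = _
    rw [h]; exact congrFun (congrFun (Φ.map_add _ _) _) _
  map_smul' r M := by
    funext p q
    have h : (fun k k' => (r • M) (p.1, k) (q.1, k')) =
        r • ((fun k k' => M (p.1, k) (q.1, k')) : Matrix n n ℂ) := rfl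
    show Φ _ p.2 q.2 = _
    rw [h]; exact congrFun (congrFun (Φ.map_smul _ _) _) _

/-- Partial transposition on the `d` wire of a matrix on `(ℂᶜ ⊗ ℂᵈ) ⊗ ℂᵃ`:
`(Aᶿᵈ)_{((i,k),x),((i',k'),x')} = A_{((i,k'),x),((i',k),x')}`. -/
def ptransposeD {c d a : Type*} (A : Matrix ((c × d) × a) ((c × d) × a) ℂ) :
    Matrix ((c × d) × a) ((c × d) × a) ℂ :=
  fun p q => A ((p.1.1, q.1.2), p.2) ((q.1.1, p.1.2), q.2)

/-- The canonical reordering of wires `((c ⊗ d) ⊗ a) ⊗ (f ⊗ e) ≃ ((c ⊗ a) ⊗ d) ⊗ (f ⊗ e)`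
is given entrywise; here we bundle the underlying index bijection. -/
def reorderA (c d a f e : Type*) : (((c × d) × a) × (f × e)) ≃ (((c × a) × d) × (f × e)) where
  toFun p := (((p.1.1.1, p.1.2), p.1.1.2), p.2)
  invFun p := (((p.1.1.1, p.1.2), p.1.1.2), p.2)
  left_inv _ := rfl
  right_inv _ := rfl

/-- The canonical reordering of wires `(c ⊗ a) ⊗ (d ⊗ (f ⊗ e)) ≃ ((c ⊗ a) ⊗ d) ⊗ (f ⊗ e)`. -/
def reorderB (c a d f e : Type*) : ((c × a) × (d × (f × e))) ≃ (((c × a) × d) × (f × e)) where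
  toFun p := ((p.1, p.2.1), p.2.2)
  invFun p := ((p.1.1, (p.1.2, p.2)))
  left_inv _ := rfl
  right_inv _ := rfl

/-- The reordering of wires `f ⊗ (d ⊗ e) ≃ d ⊗ (f ⊗ e)` on the index of `B`. -/
def reorderBwires (f d e : Type*) : (f × (d × e)) ≃ (d × (f × e)) where
  toFun p := (p.2.1, (p.1, p.2.2))
  invFun p := (p.2.1, (p.1, p.2.2))
  left_inv _ := rfl
  right_inv _ := rfl

/-- Partial trace over the wire `d` sitting in the position `((c × a) × d) × (f × e)`. -/
noncomputable def ptraceD {c a d f e : Type*} [Fintype d]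
    (M : Matrix ((((c × a) × d) × (f × e))) ((((c × a) × d) × (f × e))) ℂ) :
    Matrix ((c × a) × (f × e)) ((c × a) × (f × e)) ℂ :=
  fun p q => ∑ k : d, M ((p.1, k), p.2) ((q.1, k), q.2)

/-- The link product `A * B = Tr_d[(Aᶿᵈ ⊗ I_{f,e})(I_{c,a} ⊗ B)]` of `A` on `(ℂᶜ ⊗ ℂᵈ) ⊗ ℂᵃ`
and `B` on `ℂᶠ ⊗ (ℂᵈ ⊗ ℂᵉ)`, the identity factors being inserted so that both operators act
on the common space spanned by the wires `c, a, d, f, e`. -/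
noncomputable def linkCD {c d a f e : Type*} [Fintype c] [Fintype d] [Fintype a] [Fintype f]
    [Fintype e] [DecidableEq c] [DecidableEq a] [DecidableEq f] [DecidableEq e]
    (A : Matrix ((c × d) × a) ((c × d) × a) ℂ) (B : Matrix (f × (d × e)) (f × (d × e)) ℂ) :
    Matrix ((c × a) × (f × e)) ((c × a) × (f × e)) ℂ :=
  ptraceD
    ((Matrix.reindex (reorderA c d a f e) (reorderA c d a f e)
        (ptransposeD A ⊗ₖ (1 : Matrix (f × e) (f × e) ℂ))) *
      (Matrix.reindex (reorderB c a d f e) (reorderB c a d f e)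
        ((1 : Matrix (c × a) (c × a) ℂ) ⊗ₖ
          (Matrix.reindex (reorderBwires f d e) (reorderBwires f d e) B))))

/-- The reordering identifying the index `(c × f) × (a × e)` of `Choi(𝒞)` with the index
`(c × a) × (f × e)` of the link product. -/
def reorderChoi (c f a e : Type*) : ((c × f) × (a × e)) ≃ ((c × a) × (f × e)) where
  toFun p := ((p.1.1, p.2.1), (p.1.2, p.2.2))
  invFun p := ((p.1.1, p.2.1), (p.1.2, p.2.2))
  left_inv _ := rfl
  right_inv _ := rfl

/-- Composition rule for Choi operators, Rule 3: let `𝒜` map matrices on `ℂᵃ`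
to matrices on `ℂᶜ ⊗ ℂᵈ` with Choi operator `A`, and let `ℬ` map matrices on `ℂᵈ ⊗ ℂᵉ` to
matrices on `ℂᶠ` with Choi operator `B`.  Let `𝒞` be the composite map from matrices on
`ℂᵃ ⊗ ℂᵉ` to matrices on `ℂᶜ ⊗ ℂᶠ` obtained by applying `𝒜 ⊗ I_e`, reordering tensor factors
to `ℂᶜ ⊗ (ℂᵈ ⊗ ℂᵉ)`, and then applying `I_c ⊗ ℬ`.  Then `Choi(𝒞)` equals the link product
`A * B = Tr_d[(Aᶿᵈ ⊗ I_{f,e})(I_{c,a} ⊗ B)]` (up to the canonical identification of the two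
index orderings). -/

lemma lin_apply_eq {n m : Type*} [Fintype n] [DecidableEq n]
    (Φ : Matrix n n ℂ →ₗ[ℂ] Matrix m m ℂ) (M : Matrix n n ℂ) (u u' : m) :
    Φ M u u' = ∑ p : n, ∑ q : n, M p q * choi Φ (u, p) (u', q) := by
  conv_lhs => rw [Matrix.matrix_eq_sum_single M]
  rw [map_sum]
  simp only [Matrix.sum_apply]
  refine Finset.sum_congr rfl fun p _ => ?_
  rw [map_sum]
  simp only [Matrix.sum_apply]
  refine Finset.sum_congr rfl fun q _ => ?_
  rw [show Matrix.single p q (M p q) = M p q • Matrix.single p q 1 by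
    rw [Matrix.smul_single, smul_eq_mul, mul_one], _root_.map_smul]
  simp [choi]

theorem choi_composition {a c d e f : Type*} [Fintype a] [Fintype c] [Fintype d] [Fintype e]
    [Fintype f] [DecidableEq a] [DecidableEq c] [DecidableEq d] [DecidableEq e] [DecidableEq f]
    (𝒜 : Matrix a a ℂ →ₗ[ℂ] Matrix (c × d) (c × d) ℂ)
    (ℬ : Matrix (d × e) (d × e) ℂ →ₗ[ℂ] Matrix f f ℂ)
    (𝒞 : Matrix (a × e) (a × e) ℂ →ₗ[ℂ] Matrix (c × f) (c × f) ℂ)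
    (h𝒞 : 𝒞 = (idTensor c ℬ) ∘ₗ
      (Matrix.reindexLinearEquiv ℂ ℂ (Equiv.prodAssoc c d e) (Equiv.prodAssoc c d e)).toLinearMap
        ∘ₗ (tensorId 𝒜 e)) :
    Matrix.reindex (reorderChoi c f a e) (reorderChoi c f a e) (choi 𝒞) =
      linkCD (choi 𝒜) (choi ℬ) := by
  subst h𝒞
  ext ⟨⟨i, x⟩, u, y⟩ ⟨⟨i', x'⟩, u', y'⟩
  rw [Matrix.reindex_apply, Matrix.submatrix_apply]
  have hsym : ∀ (p : (c × a) × (f × e)), (reorderChoi c f a e).symm p =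
      ((p.1.1, p.2.1), (p.1.2, p.2.2)) := fun _ => rfl
  rw [hsym, hsym]
  have rhs : linkCD (choi 𝒜) (choi ℬ) ((i, x), u, y) ((i', x'), u', y') =
      ∑ k : d, ∑ k' : d, choi 𝒜 ((i, k), x) ((i', k'), x') * choi ℬ ((u, (k, y))) ((u', (k', y'))) := by
    simp only [linkCD, ptraceD, Matrix.mul_apply, Matrix.reindex_apply, Matrix.submatrix_apply,
      reorderA, reorderB, reorderBwires, Equiv.coe_fn_symm_mk, Matrix.kroneckerMap_apply,
      ptransposeD, Matrix.one_apply]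
    simp only [Fintype.sum_prod_type, Prod.mk.injEq, ite_and, ite_mul, mul_ite, zero_mul,
      mul_zero, one_mul, mul_one, Finset.sum_ite_eq, Finset.sum_ite_eq', Finset.mem_univ,
      if_true, Finset.sum_ite_irrel, Finset.sum_const_zero]
    exact Finset.sum_comm
  rw [rhs]
  simp only [choi, LinearMap.comp_apply, LinearEquiv.coe_coe, idTensor, LinearMap.coe_mk,
    AddHom.coe_mk]
  refine (lin_apply_eq ℬ _ _ _).trans ?_
  have hN : ∀ (k k' : d) (y₀ y₀' : e),
      (Matrix.reindexLinearEquiv ℂ ℂ (Equiv.prodAssoc c d e) (Equiv.prodAssoc c d e))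
        (tensorId 𝒜 e (Matrix.single ((x, y) : a × e) ((x', y') : a × e) 1))
        (i, (k, y₀)) (i', (k', y₀')) =
      (if y₀ = y then 1 else 0) * (if y₀' = y' then 1 else 0) *
        choi 𝒜 ((i, k), x) ((i', k'), x') := by
    intro k k' y₀ y₀'
    show 𝒜 (fun t t' => Matrix.single ((x, y) : a × e) (x', y') (1 : ℂ) (t, y₀) (t', y₀'))
        (i, k) (i', k') = _
    rcases eq_or_ne y₀ y with rfl | h1
    · rcases eq_or_ne y₀' y' with rfl | h2
      · rw [show (fun t t' => Matrix.single ((x, y₀) : a × e) (x', y₀') (1 : ℂ)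
            (t, y₀) (t', y₀')) = Matrix.single x x' (1 : ℂ) by
          ext t t'; simp [Matrix.single, Prod.ext_iff]]
        simp [choi]
      · rw [show (fun t t' => Matrix.single ((x, y₀) : a × e) (x', y') (1 : ℂ)
            (t, y₀) (t', y₀')) = (0 : Matrix a a ℂ) by
          ext t t'; simp [Matrix.single, Prod.ext_iff, h2, Ne.symm h2]]
        simp [h2]
    · rw [show (fun t t' => Matrix.single ((x, y) : a × e) (x', y') (1 : ℂ)
          (t, y₀) (t', y₀')) = (0 : Matrix a a ℂ) by
        ext t t'; simp [Matrix.single, Prod.ext_iff, h1, Ne.symm h1]]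
      simp [h1]
  simp only [Fintype.sum_prod_type, hN, ite_mul, one_mul, zero_mul, Finset.sum_ite_irrel,
    Finset.sum_const_zero, Finset.sum_ite_eq, Finset.sum_ite_eq', Finset.mem_univ, if_true]
  rfl
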